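/- For every G-free LTL formula φ and every infinite word w, w satisfies φ if and only if there exists i ∈ ℕ such that af(φ, w[0..i]) is propositionally equivalent to tt, where w[0..i] denotes the prefix of w of length i+1. -/
import Mathlib


namespace LTLF

/-- LTL formulas in negation normal form over atomic propositions `Ap`. -/
inductive LTL (Ap : Type) : Type
  | tt : LTL Ap
  | ff : LTL Ap
  | atom : Ap → LTL Ap
  | natom : Ap → LTL Ap
  | and : LTL Ap → LTL Ap → LTL Ap
  | or : LTL Ap → LTL Ap → LTL Ap
  | next : LTL Ap → LTL Ap
  | fut : LTL Ap → LTL Ap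
  | glob : LTL Ap → LTL Ap
  | untl : LTL Ap → LTL Ap → LTL Ap

variable {Ap : Type}

/-- Infinite words over the alphabet `2^Ap`. -/
abbrev Word (Ap : Type) := ℕ → Set Ap

/-- The suffix `w_k`. -/
def suffix (w : Word Ap) (k : ℕ) : Word Ap := fun i => w (i + k)

/-- Standard LTL semantics on infinite words. -/
def Sat : LTL Ap → Word Ap → Prop
  | .tt, _ => True
  | .ff, _ => False
  | .atom a, w => a ∈ w 0
  | .natom a, w => a ∉ w 0
  | .and φ ψ, w => Sat φ w ∧ Sat ψ w
  | .or φ ψ, w => Sat φ w ∨ Sat ψ w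
  | .next φ, w => Sat φ (suffix w 1)
  | .fut φ, w => ∃ k, Sat φ (suffix w k)
  | .glob φ, w => ∀ k, Sat φ (suffix w k)
  | .untl φ ψ, w => ∃ k, Sat ψ (suffix w k) ∧ ∀ j < k, Sat φ (suffix w j)

open Classical in
/-- The "after function" `af(φ, ν)`. -/
noncomputable def af : LTL Ap → Set Ap → LTL Ap
  | .tt, _ => .tt
  | .ff, _ => .ff
  | .atom a, ν => if a ∈ ν then .tt else .ff
  | .natom a, ν => if a ∈ ν then .ff else .tt
  | .and φ ψ, ν => .and (af φ ν) (af ψ ν)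
  | .or φ ψ, ν => .or (af φ ν) (af ψ ν)
  | .next φ, _ => φ
  | .fut φ, ν => .or (af φ ν) (.fut φ)
  | .glob φ, ν => .and (af φ ν) (.glob φ)
  | .untl φ ψ, ν => .or (af ψ ν) (.and (af φ ν) (.untl φ ψ))

/-- `af` extended to finite words. -/
noncomputable def afw (φ : LTL Ap) (u : List (Set Ap)) : LTL Ap := u.foldl af φ

open Classical in
/-- The variant `afG`, identical to `af` except `afG(Gφ, ν) = Gφ`. -/
noncomputable def afG : LTL Ap → Set Ap → LTL Ap
  | .tt, _ => .tt
  | .ff, _ => .ff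
  | .atom a, ν => if a ∈ ν then .tt else .ff
  | .natom a, ν => if a ∈ ν then .ff else .tt
  | .and φ ψ, ν => .and (afG φ ν) (afG ψ ν)
  | .or φ ψ, ν => .or (afG φ ν) (afG ψ ν)
  | .next φ, _ => φ
  | .fut φ, ν => .or (afG φ ν) (.fut φ)
  | .glob φ, _ => .glob φ
  | .untl φ ψ, ν => .or (afG ψ ν) (.and (afG φ ν) (.untl φ ψ))

/-- `afG` extended to finite words. -/
noncomputable def afGw (φ : LTL Ap) (u : List (Set Ap)) : LTL Ap := u.foldl afG φ

/-- The finite infix `w[i..j] = w[i] w[i+1] ⋯ w[j]`. -/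
def infixW (w : Word Ap) (i j : ℕ) : List (Set Ap) :=
  (List.range (j + 1 - i)).map (fun k => w (i + k))

/-- The finite prefix `w[0..i]`. -/
def prefixW (w : Word Ap) (i : ℕ) : List (Set Ap) := infixW w 0 i

/-- Concatenation of a finite word with an infinite word. -/
def cat (u : List (Set Ap)) (w : Word Ap) : Word Ap :=
  fun k => if h : k < u.length then u.get ⟨k, h⟩ else w (k - u.length)

/-- Propositional evaluation of a formula under a valuation `v`, treating
literals and temporal formulas (`X`, `F`, `G`, `U`) as opaque propositional atoms. -/
def propSat (v : LTL Ap → Prop) : LTL Ap → Prop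
  | .tt => True
  | .ff => False
  | .and φ ψ => propSat v φ ∧ propSat v ψ
  | .or φ ψ => propSat v φ ∨ propSat v ψ
  | φ => v φ

/-- A valuation is consistent on literals: `a` and `¬a` get complementary values. -/
def LitConsistent (v : LTL Ap → Prop) : Prop :=
  ∀ a : Ap, v (.atom a) ↔ ¬ v (.natom a)

/-- Propositional implication `φ ⊨_p ψ`. -/
def PropImp (φ ψ : LTL Ap) : Prop :=
  ∀ v : LTL Ap → Prop, LitConsistent v → propSat v φ → propSat v ψ

/-- Propositional equivalence `φ ≡_p ψ`. -/
def PropEquiv (φ ψ : LTL Ap) : Prop :=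
  ∀ v : LTL Ap → Prop, LitConsistent v → (propSat v φ ↔ propSat v ψ)

/-- `⋀_{χ ∈ H} χ ⊨_p ψ` : the (possibly infinite) conjunction of the
hypotheses `H` propositionally implies `ψ`. -/
def PropImpSet (H : Set (LTL Ap)) (ψ : LTL Ap) : Prop :=
  ∀ v : LTL Ap → Prop, LitConsistent v → (∀ χ ∈ H, propSat v χ) → propSat v ψ

/-- The list of subformulas of a formula. -/
def subfs : LTL Ap → List (LTL Ap)
  | .tt => [.tt]
  | .ff => [.ff]
  | .atom a => [.atom a]
  | .natom a => [.natom a]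
  | .and φ ψ => .and φ ψ :: (subfs φ ++ subfs ψ)
  | .or φ ψ => .or φ ψ :: (subfs φ ++ subfs ψ)
  | .next φ => .next φ :: subfs φ
  | .fut φ => .fut φ :: subfs φ
  | .glob φ => .glob φ :: subfs φ
  | .untl φ ψ => .untl φ ψ :: (subfs φ ++ subfs ψ)

/-- `Gψ` is a `G`-subformula of `φ`. -/
def GSub (φ ψ : LTL Ap) : Prop := LTL.glob ψ ∈ subfs φ

/-- A formula is `G`-free if it contains no occurrence of `G`. -/
def GFree : LTL Ap → Prop
  | .glob _ => False
  | .and φ ψ => GFree φ ∧ GFree ψ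
  | .or φ ψ => GFree φ ∧ GFree ψ
  | .next φ => GFree φ
  | .fut φ => GFree φ
  | .untl φ ψ => GFree φ ∧ GFree ψ
  | _ => True

/-- `ind(w, ψ)`: the least index `j` with `w_j ⊨ Gψ`. -/
noncomputable def ind (w : Word Ap) (ψ : LTL Ap) : ℕ :=
  sInf {j | Sat (.glob ψ) (suffix w j)}


section Aux
variable {Ap : Type}

lemma suffix_zero (w : Word Ap) : suffix w 0 = w := by funext n; simp [suffix]

lemma suffix_suffix (w : Word Ap) (a b : ℕ) : suffix (suffix w a) b = suffix w (b + a) := by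
  funext n; simp [suffix, Nat.add_assoc]

lemma sat_af (φ : LTL Ap) : ∀ w : Word Ap, Sat (af φ (w 0)) (suffix w 1) ↔ Sat φ w := by
  induction φ with
  | tt => simp [af, Sat]
  | ff => simp [af, Sat]
  | atom a => intro w; by_cases h : a ∈ w 0 <;> simp [af, h, Sat]
  | natom a => intro w; by_cases h : a ∈ w 0 <;> simp [af, h, Sat]
  | and φ ψ ihφ ihψ => intro w; simp [af, Sat, ihφ, ihψ]
  | or φ ψ ihφ ihψ => intro w; simp [af, Sat, ihφ, ihψ]
  | next φ ih => intro w; simp [af, Sat]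
  | fut φ ih =>
    intro w
    simp only [af, Sat, suffix_suffix, ih]
    constructor
    · rintro (h | ⟨k, hk⟩)
      · exact ⟨0, by simpa [suffix_zero] using h⟩
      · exact ⟨k + 1, hk⟩
    · rintro ⟨k, hk⟩
      cases k with
      | zero => exact Or.inl (by simpa [suffix_zero] using hk)
      | succ k => exact Or.inr ⟨k, hk⟩
  | glob φ ih =>
    intro w
    simp only [af, Sat, suffix_suffix, ih]
    constructor
    · rintro ⟨h0, h⟩ k
      cases k with
      | zero => simpa [suffix_zero] using h0
      | succ k => exact h k
    · intro h
      exact ⟨by simpa [suffix_zero] using h 0, fun k => h (k + 1)⟩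
  | untl φ ψ ihφ ihψ =>
    intro w
    simp only [af, Sat, suffix_suffix, ihφ, ihψ]
    constructor
    · rintro (h | ⟨h0, k, hk, hj⟩)
      · exact ⟨0, by simpa [suffix_zero] using h, by omega⟩
      · refine ⟨k + 1, hk, ?_⟩
        intro j hj'
        cases j with
        | zero => simpa [suffix_zero] using h0
        | succ j => exact hj j (by omega)
    · rintro ⟨k, hk, hj⟩
      cases k with
      | zero => exact Or.inl (by simpa [suffix_zero] using hk)
      | succ k =>
        refine Or.inr ⟨by simpa [suffix_zero] using hj 0 (by omega), k, hk, ?_⟩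
        intro j hj'
        exact hj (j + 1) (by omega)

lemma afw_append (φ : LTL Ap) (u v : List (Set Ap)) :
    afw φ (u ++ v) = afw (afw φ u) v := by
  simp [afw]

lemma afw_cons (φ : LTL Ap) (ν : Set Ap) (u : List (Set Ap)) :
    afw φ (ν :: u) = afw (af φ ν) u := rfl

lemma afw_and (φ ψ : LTL Ap) (u : List (Set Ap)) :
    afw (.and φ ψ) u = .and (afw φ u) (afw ψ u) := by
  induction u generalizing φ ψ with
  | nil => rfl
  | cons ν u ih => simp [afw_cons, af, ih]

lemma afw_or (φ ψ : LTL Ap) (u : List (Set Ap)) :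
    afw (.or φ ψ) u = .or (afw φ u) (afw ψ u) := by
  induction u generalizing φ ψ with
  | nil => rfl
  | cons ν u ih => simp [afw_cons, af, ih]

lemma prefixW_zero (w : Word Ap) : prefixW w 0 = [w 0] := by
  simp [prefixW, infixW, List.range_succ]

lemma prefixW_succ (w : Word Ap) (i : ℕ) :
    prefixW w (i + 1) = prefixW w i ++ [w (i + 1)] := by
  simp [prefixW, infixW, List.range_succ]

lemma length_prefixW (w : Word Ap) (i : ℕ) : (prefixW w i).length = i + 1 := by
  simp [prefixW, infixW]

lemma prefixW_cons (w : Word Ap) (i : ℕ) :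
    prefixW w (i + 1) = w 0 :: prefixW (suffix w 1) i := by
  simp only [prefixW, infixW, Nat.sub_zero, List.range_succ_eq_map, List.map_cons,
    List.map_map]
  refine congrArg₂ _ (by norm_num) (congrArg₂ _ (by simp [suffix]) ?_)
  apply List.map_congr_left
  intro k _
  simp only [Function.comp, suffix]
  exact congrArg w (by omega)

lemma drop_prefixW (w : Word Ap) (k m : ℕ) (h : k ≤ m) :
    (prefixW w m).drop k = prefixW (suffix w k) (m - k) := by
  induction k with
  | zero => simp [suffix_zero]
  | succ k ih =>
    obtain ⟨n, hn⟩ : ∃ n, m - k = n + 1 := ⟨m - (k + 1), by omega⟩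
    have h1 := ih (by omega)
    have h2 : (prefixW w m).drop (k + 1) = ((prefixW w m).drop k).drop 1 := by
      rw [List.drop_drop]
    rw [h2, h1, hn, prefixW_cons, List.drop_one, List.tail_cons, suffix_suffix]
    rw [Nat.add_comm 1 k]
    congr 1
    omega

lemma sat_afw_prefix (φ : LTL Ap) (w : Word Ap) (i : ℕ) :
    Sat (afw φ (prefixW w i)) (suffix w (i + 1)) ↔ Sat φ w := by
  induction i with
  | zero =>
    rw [prefixW_zero]
    exact sat_af φ w
  | succ i ih =>
    rw [prefixW_succ, afw_append]
    have := sat_af (afw φ (prefixW w i)) (suffix w (i + 1))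
    have h0 : (suffix w (i + 1)) 0 = w (i + 1) := by simp [suffix]
    have h1 : suffix (suffix w (i + 1)) 1 = suffix w (i + 1 + 1) := by
      rw [suffix_suffix]; ring_nf
    rw [h0, h1] at this
    rw [show afw (afw φ (prefixW w i)) [w (i+1)] = af (afw φ (prefixW w i)) (w (i+1)) from rfl]
    rw [this, ih]

lemma litConsistent_sat (w : Word Ap) : LitConsistent (fun χ => Sat χ w) := by
  intro a; simp [Sat]

lemma propSat_sat (w : Word Ap) (ψ : LTL Ap) :
    propSat (fun χ => Sat χ w) ψ ↔ Sat ψ w := by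
  induction ψ with
  | and φ ψ ihφ ihψ => simp [propSat, Sat, ihφ, ihψ]
  | or φ ψ ihφ ihψ => simp [propSat, Sat, ihφ, ihψ]
  | tt => simp [propSat, Sat]
  | ff => simp [propSat, Sat]
  | _ => simp [propSat]

/-- Tautology. -/
def Taut (φ : LTL Ap) : Prop := PropEquiv φ .tt

lemma taut_iff (φ : LTL Ap) : Taut φ ↔ ∀ v : LTL Ap → Prop, LitConsistent v → propSat v φ := by
  unfold Taut PropEquiv
  constructor
  · intro h v hv; exact (h v hv).mpr trivial
  · intro h v hv; exact ⟨fun _ => trivial, fun _ => h v hv⟩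

lemma propSat_af (v : LTL Ap → Prop) (ν : Set Ap) (χ : LTL Ap) :
    propSat v (af χ ν) ↔ propSat (fun ρ => propSat v (af ρ ν)) χ := by
  induction χ with
  | and φ ψ ihφ ihψ => simp only [af, propSat, ihφ, ihψ]
  | or φ ψ ihφ ihψ => simp only [af, propSat, ihφ, ihψ]
  | _ => exact Iff.rfl

lemma litConsistent_af (v : LTL Ap → Prop) (ν : Set Ap) :
    LitConsistent (fun ρ => propSat v (af ρ ν)) := by
  intro a
  by_cases h : a ∈ ν <;> simp [af, h, propSat]

lemma taut_af {χ : LTL Ap} (h : Taut χ) (ν : Set Ap) : Taut (af χ ν) := by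
  rw [taut_iff] at h ⊢
  intro v hv
  rw [propSat_af]
  exact h _ (litConsistent_af v ν)

lemma taut_afw {χ : LTL Ap} (h : Taut χ) (u : List (Set Ap)) : Taut (afw χ u) := by
  induction u generalizing χ with
  | nil => exact h
  | cons ν u ih => exact ih (taut_af h ν)

lemma taut_and {φ ψ : LTL Ap} (hφ : Taut φ) (hψ : Taut ψ) : Taut (.and φ ψ) := by
  rw [taut_iff] at hφ hψ ⊢
  intro v hv; exact ⟨hφ v hv, hψ v hv⟩

lemma taut_or_left {φ : LTL Ap} (ψ : LTL Ap) (hφ : Taut φ) : Taut (.or φ ψ) := by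
  rw [taut_iff] at hφ ⊢
  intro v hv; exact Or.inl (hφ v hv)

lemma taut_or_right (φ : LTL Ap) {ψ : LTL Ap} (hψ : Taut ψ) : Taut (.or φ ψ) := by
  rw [taut_iff] at hψ ⊢
  intro v hv; exact Or.inr (hψ v hv)

lemma taut_prefix_mono {φ : LTL Ap} {w : Word Ap} {i i' : ℕ} (h : i ≤ i')
    (ht : Taut (afw φ (prefixW w i))) : Taut (afw φ (prefixW w i')) := by
  induction i' with
  | zero =>
    have : i = 0 := by omega
    subst this; exact ht
  | succ n ih =>
    rcases Nat.lt_or_ge i (n + 1) with hlt | hge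
    · have := ih (by omega)
      rw [prefixW_succ, afw_append]
      exact taut_afw this _
    · have : i = n + 1 := by omega
      subst this; exact ht

lemma taut_fut {φ : LTL Ap} : ∀ (u : List (Set Ap)) (k : ℕ), k < u.length →
    Taut (afw φ (u.drop k)) → Taut (afw (.fut φ) u) := by
  intro u
  induction u with
  | nil => intro k hk; simp at hk
  | cons ν u ih =>
    intro k hk h
    rw [afw_cons, show af (LTL.fut φ) ν = .or (af φ ν) (.fut φ) from rfl, afw_or]
    cases k with
    | zero =>
      exact taut_or_left _ (by simpa [afw_cons] using h)
    | succ k =>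
      exact taut_or_right _ (ih k (by simpa using hk) (by simpa using h))

lemma taut_untl {φ ψ : LTL Ap} : ∀ (u : List (Set Ap)) (k : ℕ), k < u.length →
    Taut (afw ψ (u.drop k)) → (∀ j < k, Taut (afw φ (u.drop j))) →
    Taut (afw (.untl φ ψ) u) := by
  intro u
  induction u with
  | nil => intro k hk; simp at hk
  | cons ν u ih =>
    intro k hk hψ hφ
    rw [afw_cons, show af (LTL.untl φ ψ) ν = .or (af ψ ν) (.and (af φ ν) (.untl φ ψ)) from rfl,
      afw_or, afw_and]
    cases k with
    | zero =>
      exact taut_or_left _ (by simpa [afw_cons] using hψ)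
    | succ k =>
      refine taut_or_right _ (taut_and ?_ ?_)
      · have := hφ 0 (by omega)
        simpa [afw_cons] using this
      · refine ih k (by simpa using hk) (by simpa using hψ) ?_
        intro j hj
        have := hφ (j + 1) (by omega)
        simpa using this

end Aux

/-- a `G`-free formula `φ` holds on `w` iff some prefix drives it
(propositionally) to `tt`. -/
theorem gfree_sat_iff_af_tt {Ap : Type} (φ : LTL Ap) (hφ : GFree φ) (w : Word Ap) :
    Sat φ w ↔ ∃ i : ℕ, PropEquiv (afw φ (prefixW w i)) LTL.tt := by
  constructor
  · intro hsat
    induction φ generalizing w with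
    | tt => exact ⟨0, taut_afw (by rw [taut_iff]; intro v hv; trivial) _⟩
    | ff => exact absurd hsat id
    | atom a =>
      refine ⟨0, ?_⟩
      rw [prefixW_zero]
      have ha : a ∈ w 0 := hsat
      have : af (LTL.atom a) (w 0) = LTL.tt := by simp [af, ha]
      have e : afw (LTL.atom a) [w 0] = LTL.tt := by rw [afw_cons, this]; rfl
      rw [e]
      exact fun v _ => Iff.rfl
    | natom a =>
      refine ⟨0, ?_⟩
      rw [prefixW_zero]
      have ha : a ∉ w 0 := hsat
      have : af (LTL.natom a) (w 0) = LTL.tt := by simp [af, ha]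
      have e : afw (LTL.natom a) [w 0] = LTL.tt := by rw [afw_cons, this]; rfl
      rw [e]
      exact fun v _ => Iff.rfl
    | and φ ψ ihφ ihψ =>
      obtain ⟨i, hi⟩ := ihφ hφ.1 w hsat.1
      obtain ⟨j, hj⟩ := ihψ hφ.2 w hsat.2
      refine ⟨max i j, ?_⟩
      show Taut _
      unfold Taut
      rw [afw_and]
      exact taut_and (taut_prefix_mono (le_max_left i j) hi)
        (taut_prefix_mono (le_max_right i j) hj)
    | or φ ψ ihφ ihψ =>
      cases hsat with
      | inl h =>
        obtain ⟨i, hi⟩ := ihφ hφ.1 w h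
        exact ⟨i, by show Taut _; rw [afw_or]; exact taut_or_left _ hi⟩
      | inr h =>
        obtain ⟨i, hi⟩ := ihψ hφ.2 w h
        exact ⟨i, by show Taut _; rw [afw_or]; exact taut_or_right _ hi⟩
    | next φ ih =>
      obtain ⟨i, hi⟩ := ih hφ (suffix w 1) hsat
      refine ⟨i + 1, ?_⟩
      rw [prefixW_cons]
      show Taut (afw _ _)
      rw [afw_cons, show af (LTL.next φ) (w 0) = φ from rfl]
      exact hi
    | fut φ ih =>
      obtain ⟨k, hk⟩ := hsat
      obtain ⟨i, hi⟩ := ih hφ (suffix w k) hk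
      refine ⟨k + i, taut_fut (prefixW w (k + i)) k (by rw [length_prefixW]; omega) ?_⟩
      rw [drop_prefixW w k (k + i) (by omega), show k + i - k = i from by omega]
      exact hi
    | glob φ ih => exact absurd hφ id
    | untl φ ψ ihφ ihψ =>
      obtain ⟨k, hk, hkj⟩ := hsat
      obtain ⟨i, hi⟩ := ihψ hφ.2 (suffix w k) hk
      choose f hf using fun (j : ℕ) (hj : j < k) => ihφ hφ.1 (suffix w j) (hkj j hj)
      classical
      set m := k + i + (Finset.range k).sup (fun j => if h : j < k then f j h else 0) with hm
      refine ⟨m, taut_untl (prefixW w m) k (by rw [length_prefixW]; omega) ?_ ?_⟩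
      · rw [drop_prefixW w k m (by omega)]
        exact taut_prefix_mono (by omega) hi
      · intro j hj
        rw [drop_prefixW w j m (by omega)]
        refine taut_prefix_mono ?_ (hf j hj)
        have hle : f j hj ≤ (Finset.range k).sup (fun j' => if h : j' < k then f j' h else 0) := by
          have := Finset.le_sup (f := fun j' => if h : j' < k then f j' h else 0)
            (Finset.mem_range.mpr hj)
          simpa [hj] using this
        omega
  · rintro ⟨i, hi⟩
    rw [← sat_afw_prefix φ w i]
    rw [← propSat_sat (suffix w (i + 1))]
    have := (hi _ (litConsistent_sat (suffix w (i + 1)))).mpr trivial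
    exact this

end LTLF
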